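/- Let C_1, ..., C_{d+1} be finite subsets of R^d such that 0 ∈ ch(C_i) for each i. Then there exist points c_1 ∈ C_1, ..., c_{d+1} ∈ C_{d+1} such that 0 ∈ ch({c_1, ..., c_{d+1}}). -/

import Mathlib

open Metric Finset
open scoped RealInnerProductSpace

/-- Colorful Carathéodory theorem: if `0` lies in the convex hull of each of the
`d+1` color classes `C i`, then one can select one point from each class so that
`0` lies in the convex hull of the selection. -/
theorem colorful_caratheodory (d : ℕ)
    (C : Fin (d + 1) → Finset (EuclideanSpace ℝ (Fin d)))
    (hC : ∀ i, (0 : EuclideanSpace ℝ (Fin d)) ∈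
      convexHull ℝ ((C i : Set (EuclideanSpace ℝ (Fin d))))) :
    ∃ g : Fin (d + 1) → EuclideanSpace ℝ (Fin d),
      (∀ i, g i ∈ C i) ∧
      (0 : EuclideanSpace ℝ (Fin d)) ∈ convexHull ℝ (Set.range g) := by
  classical
  have hne : ∀ i, (C i).Nonempty := by
    intro i
    by_contra h
    rw [Finset.not_nonempty_iff_eq_empty] at h
    simpa [h] using hC i
  set S : Finset (Fin (d + 1) → (EuclideanSpace ℝ (Fin d))) := Fintype.piFinset C with hS
  have hSne : S.Nonempty := Fintype.piFinset_nonempty.2 hne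
  set F : (Fin (d + 1) → (EuclideanSpace ℝ (Fin d))) → ℝ :=
    fun g => infDist 0 (convexHull ℝ (Set.range g)) with hF
  obtain ⟨g, hgS, hgmin⟩ := S.exists_min_image F hSne
  have hgC : ∀ i, g i ∈ C i := Fintype.mem_piFinset.1 hgS
  set K : Set (EuclideanSpace ℝ (Fin d)) := convexHull ℝ (Set.range g) with hK
  have hKconv : Convex ℝ K := convex_convexHull ℝ _
  have hKcpt : IsCompact K := (Set.finite_range g).isCompact_convexHull ℝ
  have hKne : K.Nonempty := ⟨g 0, subset_convexHull ℝ _ ⟨0, rfl⟩⟩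
  obtain ⟨x, hxK, hxd⟩ := hKcpt.exists_infDist_eq_dist hKne 0
  -- it suffices to show x = 0
  refine ⟨g, hgC, ?_⟩
  by_contra hcon
  have hx0 : x ≠ 0 := fun h => hcon (h ▸ hxK)
  -- projection inequality
  have hproj : ∀ w ∈ K, ‖x‖ ^ 2 ≤ ⟪x, w⟫ := by
    have h1 : ‖(0 : (EuclideanSpace ℝ (Fin d))) - x‖ = ⨅ w : K, ‖(0 : (EuclideanSpace ℝ (Fin d))) - w‖ := by
      have : Metric.infDist 0 K = ⨅ w : K, dist 0 (w : (EuclideanSpace ℝ (Fin d))) := Metric.infDist_eq_iInf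
      rw [dist_eq_norm] at hxd
      rw [← hxd, this]
      exact iInf_congr fun w => dist_eq_norm (0 : EuclideanSpace ℝ (Fin d)) (w : EuclideanSpace ℝ (Fin d))
    have h2 := (norm_eq_iInf_iff_real_inner_le_zero hKconv hxK).1 h1
    intro w hw
    have := h2 w hw
    rw [zero_sub, inner_neg_left, inner_sub_right, neg_nonpos] at this
    have hxx : ⟪x, x⟫ = ‖x‖ ^ 2 := real_inner_self_eq_norm_sq x
    linarith
  -- the finset of vertices
  set R : Finset (EuclideanSpace ℝ (Fin d)) := Finset.image g Finset.univ with hR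
  have hRcoe : (R : Set (EuclideanSpace ℝ (Fin d))) = Set.range g := by
    rw [hR, Finset.coe_image, Finset.coe_univ, Set.image_univ]
  -- x is in the convex hull of the touching set T
  set T : Finset (EuclideanSpace ℝ (Fin d)) := R.filter (fun y => ⟪x, y⟫ = ‖x‖ ^ 2) with hT
  have hxT : x ∈ convexHull ℝ (T : Set (EuclideanSpace ℝ (Fin d))) := by
    have hxR : x ∈ convexHull ℝ (R : Set (EuclideanSpace ℝ (Fin d))) := by rw [hRcoe]; exact hxK
    rw [Finset.convexHull_eq] at hxR
    obtain ⟨w, hw0, hw1, hwc⟩ := hxR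
    have hcm : ∑ y ∈ R, w y • y = x := by
      rwa [Finset.centerMass_eq_of_sum_1 _ _ hw1] at hwc
    have hterm : ∀ y ∈ R, w y * (⟪x, y⟫ - ‖x‖ ^ 2) = 0 := by
      have hsum : ∑ y ∈ R, w y * (⟪x, y⟫ - ‖x‖ ^ 2) = 0 := by
        have hinner : ∑ y ∈ R, w y * ⟪x, y⟫ = ‖x‖ ^ 2 := by
          have : ⟪x, ∑ y ∈ R, w y • y⟫ = ∑ y ∈ R, w y * ⟪x, y⟫ := by
            rw [inner_sum]
            exact Finset.sum_congr rfl fun y _ => real_inner_smul_right x y (w y)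
          rw [← this, hcm, real_inner_self_eq_norm_sq]
        have : ∑ y ∈ R, w y * (⟪x, y⟫ - ‖x‖ ^ 2)
            = (∑ y ∈ R, w y * ⟪x, y⟫) - (∑ y ∈ R, w y) * ‖x‖ ^ 2 := by
          rw [Finset.sum_mul, ← Finset.sum_sub_distrib]
          exact Finset.sum_congr rfl fun y _ => by ring
        rw [this, hinner, hw1]; ring
      refine (Finset.sum_eq_zero_iff_of_nonneg ?_).1 hsum
      intro y hy
      have h1 : 0 ≤ w y := hw0 y hy
      have h2 : ‖x‖ ^ 2 ≤ ⟪x, y⟫ := hproj y (by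
        have : y ∈ convexHull ℝ (R : Set (EuclideanSpace ℝ (Fin d))) :=
          subset_convexHull ℝ _ (Finset.mem_coe.2 hy)
        rwa [hRcoe] at this)
      nlinarith
    have hsup : ∀ y ∈ R, w y ≠ 0 → y ∈ T := by
      intro y hy hwy
      have := hterm y hy
      rw [hT, Finset.mem_filter]
      refine ⟨hy, ?_⟩
      rcases mul_eq_zero.1 this with h | h
      · exact absurd h hwy
      · linarith
    have hxcm : ({y ∈ R | w y ≠ 0} : Finset (EuclideanSpace ℝ (Fin d))).centerMass w id = x := by
      rw [Finset.centerMass_filter_ne_zero, hwc]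
    rw [← hxcm]
    refine Finset.centerMass_mem_convexHull _ ?_ ?_ ?_
    · intro y hy; exact hw0 y (Finset.mem_filter.1 hy).1
    · rw [Finset.sum_filter_ne_zero, hw1]; norm_num
    · intro y hy
      obtain ⟨hyR, hwy⟩ := Finset.mem_filter.1 hy
      exact hsup y hyR hwy
  -- Carathéodory inside the hyperplane
  rw [convexHull_eq_union] at hxT
  simp only [Set.mem_iUnion] at hxT
  obtain ⟨t, htT, htai, hxt⟩ := hxT
  have htne : t.Nonempty := by
    rcases t.eq_empty_or_nonempty with h | h
    · rw [h] at hxt; simp at hxt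
    · exact h
  -- every point of t has inner product ‖x‖² with x
  have htinner : ∀ y ∈ t, ⟪x, y⟫ = ‖x‖ ^ 2 := by
    intro y hy
    have := htT hy
    rw [Finset.mem_coe, hT, Finset.mem_filter] at this
    exact this.2
  have htR : ∀ y ∈ t, ∃ i, g i = y := by
    intro y hy
    have := htT hy
    rw [Finset.mem_coe, hT, Finset.mem_filter, hR, Finset.mem_image] at this
    obtain ⟨⟨i, _, hi⟩, _⟩ := this
    exact ⟨i, hi⟩
  -- bound the cardinality of t
  have hcard : t.card ≤ d := by
    obtain ⟨n, hn⟩ : ∃ n, t.card = n + 1 :=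
      ⟨t.card - 1, (Nat.succ_pred_eq_of_pos (Finset.card_pos.2 htne)).symm⟩
    have hfr : Module.finrank ℝ (vectorSpan ℝ (Set.range ((↑) : t → (EuclideanSpace ℝ (Fin d))))) = n := by
      refine htai.finrank_vectorSpan ?_
      rw [Fintype.card_coe, hn]
    have hle : vectorSpan ℝ (Set.range ((↑) : t → (EuclideanSpace ℝ (Fin d)))) ≤ (ℝ ∙ x)ᗮ := by
      rw [Subtype.range_coe, vectorSpan_def]
      rw [Submodule.span_le]
      rintro v ⟨a, ha, b, hb, rfl⟩
      rw [SetLike.mem_coe, Submodule.mem_orthogonal_singleton_iff_inner_right]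
      simp only [vsub_eq_sub]
      rw [inner_sub_right, htinner a ha, htinner b hb]
      ring
    have hlt : (ℝ ∙ x)ᗮ < ⊤ := by
      rw [lt_top_iff_ne_top]
      intro h
      have hx : x ∈ (ℝ ∙ x)ᗮ := by rw [h]; trivial
      rw [Submodule.mem_orthogonal_singleton_iff_inner_right,
        real_inner_self_eq_norm_sq] at hx
      exact hx0 (norm_eq_zero.1 (by nlinarith [norm_nonneg x]))
    have hd : Module.finrank ℝ (EuclideanSpace ℝ (Fin d)) = d := finrank_euclideanSpace_fin
    have h1 : Module.finrank ℝ (vectorSpan ℝ (Set.range ((↑) : t → (EuclideanSpace ℝ (Fin d)))))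
        ≤ Module.finrank ℝ (ℝ ∙ x)ᗮ := Submodule.finrank_mono hle
    have h2 : Module.finrank ℝ (ℝ ∙ x)ᗮ
        < Module.finrank ℝ (EuclideanSpace ℝ (Fin d)) := Submodule.finrank_lt hlt.ne
    rw [hd] at h2
    omega
  -- find an unused color
  set idx : (EuclideanSpace ℝ (Fin d)) → Fin (d + 1) := fun y => if h : ∃ i, g i = y then h.choose else 0 with hidxdef
  have hidx : ∀ y ∈ t, g (idx y) = y := by
    intro y hy
    have h := htR y hy
    simp only [hidxdef, dif_pos h]
    exact h.choose_spec
  set J : Finset (Fin (d + 1)) := t.image idx with hJ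
  have hJcard : J.card ≤ d := le_trans (Finset.card_image_le) hcard
  obtain ⟨i₀, hi₀⟩ : ∃ i₀, i₀ ∉ J := by
    by_contra h
    push_neg at h
    have : J = Finset.univ := Finset.eq_univ_iff_forall.2 h
    rw [this, Finset.card_univ, Fintype.card_fin] at hJcard
    omega
  -- find a point in C i₀ on the other side
  obtain ⟨c, hcC, hc⟩ : ∃ c ∈ C i₀, ⟪x, c⟫ ≤ 0 := by
    by_contra h
    push_neg at h
    have hsub : (C i₀ : Set (EuclideanSpace ℝ (Fin d))) ⊆ {y | 0 < ⟪x, y⟫} := fun y hy => h y hy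
    have hconv : Convex ℝ {y : (EuclideanSpace ℝ (Fin d)) | 0 < ⟪x, y⟫} :=
      convex_halfSpace_gt ⟨fun a b => inner_add_right x a b,
        fun r a => real_inner_smul_right x a r⟩ 0
    have := convexHull_min hsub hconv (hC i₀)
    simp only [Set.mem_setOf_eq, inner_zero_right] at this
    exact lt_irrefl 0 this
  -- the swapped selection
  set g' : Fin (d + 1) → (EuclideanSpace ℝ (Fin d)) := Function.update g i₀ c with hg'
  have hg'S : g' ∈ S := by
    rw [hS, Fintype.mem_piFinset]
    intro i
    by_cases h : i = i₀
    · subst h; rw [hg', Function.update_self]; exact hcC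
    · rw [hg', Function.update_of_ne h]; exact hgC i
  have htg' : (t : Set (EuclideanSpace ℝ (Fin d))) ⊆ Set.range g' := by
    intro y hy
    rw [Finset.mem_coe] at hy
    refine ⟨idx y, ?_⟩
    have hne : idx y ≠ i₀ := by
      intro h
      exact hi₀ (h ▸ Finset.mem_image_of_mem idx hy)
    rw [hg', Function.update_of_ne hne]
    exact hidx y hy
  have hxg' : x ∈ convexHull ℝ (Set.range g') := convexHull_mono htg' hxt
  have hcg' : c ∈ convexHull ℝ (Set.range g') :=
    subset_convexHull ℝ _ ⟨i₀, by rw [hg', Function.update_self]⟩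
  -- the strictly better point
  have hxpos : (0 : ℝ) < ‖x‖ := norm_pos_iff.2 hx0
  set X : ℝ := ‖x‖ ^ 2 with hX
  set Y : ℝ := ‖c‖ ^ 2 with hY
  have hXpos : 0 < X := by positivity
  have hYnn : 0 ≤ Y := by positivity
  set ε : ℝ := X / (X + Y + 1) with hε
  have hεpos : 0 < ε := by positivity
  have hεlt : ε < 1 := by
    rw [hε, div_lt_one (by linarith)]; linarith
  have hεeq : ε * (X + Y + 1) = X := by
    rw [hε]; field_simp
  set z : (EuclideanSpace ℝ (Fin d)) := (1 - ε) • x + ε • c with hz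
  have hzmem : z ∈ convexHull ℝ (Set.range g') :=
    (convex_convexHull ℝ _) hxg' hcg' (by linarith) (le_of_lt hεpos) (by ring)
  have hznorm : ‖z‖ ^ 2 = (1 - ε) ^ 2 * X + 2 * ((1 - ε) * ε * ⟪x, c⟫) + ε ^ 2 * Y := by
    rw [hz, norm_add_sq_real, norm_smul, norm_smul, real_inner_smul_left,
      real_inner_smul_right, Real.norm_eq_abs, Real.norm_eq_abs,
      abs_of_nonneg (by linarith : (0:ℝ) ≤ 1 - ε), abs_of_nonneg (le_of_lt hεpos)]
    rw [mul_pow, mul_pow, hX, hY]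
    ring
  have hzlt : ‖z‖ ^ 2 < ‖x‖ ^ 2 := by
    rw [hznorm, ← hX]
    nlinarith [mul_nonneg (mul_nonneg (by linarith : (0:ℝ) ≤ 1 - ε) (le_of_lt hεpos))
      (neg_nonneg.2 hc), mul_pos hεpos hXpos, sq_nonneg ε]
  have hzlt' : ‖z‖ < ‖x‖ := by
    nlinarith [norm_nonneg z, norm_nonneg x]
  have hlt : F g' < F g := by
    have h1 : F g' ≤ ‖z‖ := by
      have h := Metric.infDist_le_dist_of_mem (x := (0 : EuclideanSpace ℝ (Fin d))) hzmem
      rwa [dist_zero_left] at h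
    have h2 : F g = ‖x‖ := by
      show infDist 0 (convexHull ℝ (Set.range g)) = ‖x‖
      rw [← hK, hxd, dist_zero_left]
    rw [h2]; exact lt_of_le_of_lt h1 hzlt'
  exact absurd (hgmin g' hg'S) (not_le.2 hlt)
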